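/- Assume the pure peakon assumption. Then for every 1 ≤ k ≤ n, the function z ↦ C_n(z)/A_n(z) − s_{31}(z)/s_{11}(z) is O(1/z^k) as z → +∞ (big-O with respect to the filter at +∞ on the reals). -/

import Mathlib

open Matrix Polynomial

/-- The 3×3 matrix `S(x,m;z) = I − z·m·v(x)·w(x)ᵀ` with
`v(x) = (e^{−x}, −2, e^{x})ᵀ` and `w(x) = (e^{x}, 1, e^{−x})ᵀ`. -/
noncomputable def Speak (x m z : ℝ) : Matrix (Fin 3) (Fin 3) ℝ :=
  1 - (z * m) • vecMulVec ![Real.exp (-x), -2, Real.exp x] ![Real.exp x, 1, Real.exp (-x)]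

/-- `S_{[n,k]}(z) = S_n(z) · S_{n−1}(z) ⋯ S_{n−k+1}(z)`, where `S_j(z) = S(x_j, m_j; z)`. -/
noncomputable def Sblock (x m : ℕ → ℝ) (n k : ℕ) (z : ℝ) : Matrix (Fin 3) (Fin 3) ℝ :=
  ((List.range k).map (fun i => Speak (x (n - i)) (m (n - i)) z)).prod

/-- The vector `(A_j(z), B_j(z), C_j(z))ᵀ = S_j(z) · S_{j−1}(z) ⋯ S_1(z) · (1,0,0)ᵀ`. -/
noncomputable def ABCvec (x m : ℕ → ℝ) (j : ℕ) (z : ℝ) : Fin 3 → ℝ :=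
  (((List.range j).map (fun i => Speak (x (j - i)) (m (j - i)) z)).prod).mulVec ![1, 0, 0]

/-- real vectors -/
noncomputable def vR (x : ℝ) : Fin 3 → ℝ := ![Real.exp (-x), -2, Real.exp x]
noncomputable def wR (x : ℝ) : Fin 3 → ℝ := ![Real.exp x, 1, Real.exp (-x)]

/-- polynomial version of the matrix -/
noncomputable def Sp (x m : ℝ) : Matrix (Fin 3) (Fin 3) ℝ[X] :=
  1 - (C m * X) • vecMulVec (fun i => C (vR x i)) (fun i => C (wR x i))

noncomputable def Pm (x m : ℕ → ℝ) (n k : ℕ) : Matrix (Fin 3) (Fin 3) ℝ[X] :=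
  ((List.range k).map (fun i => Sp (x (n - i)) (m (n - i)))).prod

noncomputable def qv (x m : ℕ → ℝ) (j : ℕ) : Fin 3 → ℝ[X] := (Pm x m j j).mulVec ![1,0,0]

lemma Sp_eval (x m z : ℝ) : (Sp x m).map (eval z) = Speak x m z := by
  ext i j
  fin_cases i <;> fin_cases j <;>
    simp [Sp, Speak, vR, wR, vecMulVec, Matrix.one_apply] <;> ring

lemma Pm_eval (x m : ℕ → ℝ) (n k : ℕ) (z : ℝ) :
    (Pm x m n k).map (eval z) = Sblock x m n k z := by
  have : (Pm x m n k).map (eval z)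
      = (Polynomial.evalRingHom z).mapMatrix (Pm x m n k) := rfl
  rw [this, Pm, map_list_prod, Sblock, List.map_map]
  congr 1
  apply List.map_congr_left
  intro i _
  show (Polynomial.evalRingHom z).mapMatrix (Sp _ _) = _
  exact Sp_eval _ _ _

lemma qv_eval (x m : ℕ → ℝ) (j : ℕ) (z : ℝ) (i : Fin 3) :
    eval z (qv x m j i) = ABCvec x m j z i := by
  rw [ABCvec]
  have h : (List.map (fun i => Speak (x (j - i)) (m (j - i)) z) (List.range j)).prod
      = (Pm x m j j).map (eval z) := (Pm_eval x m j j z).symm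
  rw [h]
  simp [qv, Matrix.mulVec, dotProduct, Fin.sum_univ_three]

-- entry formulas
lemma Sp_smul_eq (x m : ℝ) (i j : Fin 3) :
    C m * X * (C (vR x i) * C (wR x j)) = C (m * vR x i * wR x j) * X := by
  rw [C_mul, C_mul]; ring

lemma Sp_apply (x m : ℝ) (i j : Fin 3) :
    Sp x m i j = (1 : Matrix (Fin 3) (Fin 3) ℝ[X]) i j - (C m * X) * (C (vR x i) * C (wR x j)) := by
  simp [Sp, vecMulVec]

lemma Sp_natDegree (x m : ℝ) (i j : Fin 3) : (Sp x m i j).natDegree ≤ 1 := by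
  rw [Sp_apply]
  apply (natDegree_sub_le _ _).trans
  have h1 : ((1 : Matrix (Fin 3) (Fin 3) ℝ[X]) i j).natDegree = 0 := by
    rw [Matrix.one_apply]; split <;> simp
  have h2 : (C m * X * (C (vR x i) * C (wR x j))).natDegree ≤ 1 := by
    rw [Sp_smul_eq]
    exact (natDegree_C_mul_le _ _).trans (le_of_eq natDegree_X)
  omega

lemma Sp_coeff0 (x m : ℝ) (i j : Fin 3) :
    (Sp x m i j).coeff 0 = (1 : Matrix (Fin 3) (Fin 3) ℝ) i j := by
  rw [Sp_apply, coeff_sub, Sp_smul_eq]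
  rw [Matrix.one_apply, Matrix.one_apply]
  split <;> simp [coeff_C_mul]

lemma Sp_coeff1 (x m : ℝ) (i j : Fin 3) :
    (Sp x m i j).coeff 1 = -(m * vR x i * wR x j) := by
  rw [Sp_apply, coeff_sub, Sp_smul_eq]
  rw [Matrix.one_apply]
  split <;> simp [coeff_C_mul, coeff_one]

/-- degree bound on entries of a product of matrices with degree-≤1 entries -/
lemma prod_natDegree_le (l : List (Matrix (Fin 3) (Fin 3) ℝ[X]))
    (h : ∀ M ∈ l, ∀ i j, (M i j).natDegree ≤ 1) :
    ∀ i j, (l.prod i j).natDegree ≤ l.length := by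
  induction l with
  | nil => intro i j; rw [List.prod_nil]; rw [Matrix.one_apply]; split <;> simp
  | cons a t ih =>
    intro i j
    rw [List.prod_cons, Matrix.mul_apply]
    apply (natDegree_sum_le _ _).trans
    rw [Finset.fold_max_le]
    refine ⟨by simp, fun l' _ => ?_⟩
    apply natDegree_mul_le.trans
    have h1 := h a List.mem_cons_self i l'
    have h2 := ih (fun M hM => h M (List.mem_cons_of_mem _ hM)) l' j
    simp only [List.length_cons]
    omega

lemma wR_dot_vR (x y : ℝ) :
    (∑ l, wR y l * vR x l) = Real.exp (y - x) - 2 + Real.exp (x - y) := by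
  simp only [Fin.sum_univ_three, wR, vR, Matrix.cons_val_zero, Matrix.cons_val_one,
    Matrix.head_cons, Matrix.cons_val_two, Matrix.tail_cons]
  rw [← Real.exp_add, ← Real.exp_add]
  ring_nf

lemma wR_dot_vR_self (x : ℝ) : (∑ l, wR x l * vR x l) = 0 := by
  rw [wR_dot_vR]; simp; norm_num

lemma wR_dot_vR_pos (x y : ℝ) (hxy : x < y) : 0 < ∑ l, wR y l * vR x l := by
  rw [wR_dot_vR]
  have h1 : (0:ℝ) < y - x := by linarith
  have h2 : Real.exp (x - y) = (Real.exp (y - x))⁻¹ := by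
    rw [← Real.exp_neg]; ring_nf
  have h3 : 1 < Real.exp (y - x) := by
    rw [← Real.exp_zero]; exact Real.exp_lt_exp.2 h1
  have h4 : 0 < Real.exp (y - x) := Real.exp_pos _
  rw [h2]
  have h5 : 0 < (Real.exp (y - x))⁻¹ := by positivity
  nlinarith [mul_pos (sub_pos.2 h3) (sub_pos.2 h3), mul_inv_cancel₀ (ne_of_gt h4), h4]

lemma Sp_neg (x m : ℝ) :
    Sp x (-m) = 1 + (C m * X) • vecMulVec (fun i => C (vR x i)) (fun i => C (wR x i)) := by
  rw [Sp]
  rw [show C (-m) = -C m by simp]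
  rw [show -C m * X = -(C m * X) by ring]
  rw [neg_smul, sub_neg_eq_add]

lemma T_mul_T (x m : ℝ) :
    ((C m * X) • vecMulVec (fun i => C (vR x i)) (fun i => C (wR x i))) *
      ((C m * X) • vecMulVec (fun i => C (vR x i)) (fun i => C (wR x i))) = 0 := by
  ext i j
  simp only [Matrix.mul_apply, Matrix.smul_apply, vecMulVec_apply, smul_eq_mul,
    Matrix.zero_apply]
  have : ∀ l : Fin 3, C m * X * (C (vR x i) * C (wR x l)) * (C m * X * (C (vR x l) * C (wR x j)))
      = (C m * X * C (vR x i)) * (C m * X * C (wR x j)) * (C (wR x l) * C (vR x l)) := by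
    intro l; ring
  simp only [this, ← Finset.mul_sum]
  have h0 : (∑ l : Fin 3, C (wR x l) * C (vR x l)) = 0 := by
    rw [show (∑ l : Fin 3, C (wR x l) * C (vR x l)) = C (∑ l, wR x l * vR x l) by
      simp [C_mul]]
    rw [wR_dot_vR_self]; simp
  rw [h0, mul_zero]

lemma Sp_mul_Sp_neg (x m : ℝ) : Sp x m * Sp x (-m) = 1 := by
  rw [Sp_neg, Sp, sub_mul, mul_add, mul_add, one_mul, one_mul, T_mul_T, mul_one]
  abel

lemma Sp_neg_mul_Sp (x m : ℝ) : Sp x (-m) * Sp x m = 1 := by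
  rw [Sp_neg, Sp, add_mul, mul_sub, mul_sub, one_mul, one_mul, T_mul_T, mul_one]
  abel

lemma Sp_map_eval_zero (x m : ℝ) : (Sp x m).map (eval 0) = 1 := by
  ext i j
  rw [Matrix.map_apply, Sp_apply, Sp_smul_eq]
  simp [Matrix.one_apply]
  split <;> simp

lemma det_Sp (x m : ℝ) : (Sp x m).det = 1 := by
  have hu : IsUnit (Sp x m).det := by
    apply IsUnit.of_mul_eq_one (Sp x (-m)).det
    rw [← det_mul, Sp_mul_Sp_neg, det_one]
  obtain ⟨r, hr, hCr⟩ := Polynomial.isUnit_iff.mp hu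
  have he : eval 0 (Sp x m).det = 1 := by
    rw [show eval 0 (Sp x m).det = (Polynomial.evalRingHom 0) (Sp x m).det from rfl]
    rw [RingHom.map_det, RingHom.mapMatrix_apply]
    rw [show (Sp x m).map (Polynomial.evalRingHom 0) = (Sp x m).map (eval 0) from rfl]
    rw [Sp_map_eval_zero, det_one]
  rw [← hCr] at he ⊢
  rw [eval_C] at he
  rw [he, C_1]

lemma adjugate_Sp (x m : ℝ) : adjugate (Sp x m) = Sp x (-m) := by
  have h1 : Sp x m * adjugate (Sp x m) = 1 := by
    rw [Matrix.mul_adjugate, det_Sp, one_smul]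
  calc adjugate (Sp x m) = (Sp x (-m) * Sp x m) * adjugate (Sp x m) := by
        rw [Sp_neg_mul_Sp, one_mul]
    _ = Sp x (-m) * (Sp x m * adjugate (Sp x m)) := by rw [mul_assoc]
    _ = Sp x (-m) := by rw [h1, mul_one]

lemma qv_eq (x m : ℕ → ℝ) (j : ℕ) (i : Fin 3) : qv x m j i = Pm x m j j i 0 := by
  simp [qv, Matrix.mulVec, dotProduct, Fin.sum_univ_three]

lemma Pm_natDegree (x m : ℕ → ℝ) (n k : ℕ) (i j : Fin 3) :
    (Pm x m n k i j).natDegree ≤ k := by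
  have := prod_natDegree_le ((List.range k).map (fun i => Sp (x (n - i)) (m (n - i))))
    (by intro M hM i j
        simp only [List.mem_map] at hM
        obtain ⟨a, _, rfl⟩ := hM
        exact Sp_natDegree _ _ i j) i j
  simpa [Pm] using this

lemma Pm_succ_right (x m : ℕ → ℝ) (n k : ℕ) :
    Pm x m n (k+1) = Pm x m n k * Sp (x (n-k)) (m (n-k)) := by
  rw [Pm, List.range_succ, List.map_append, List.prod_append]
  rw [Pm]
  simp

lemma Pm_self_succ (x m : ℕ → ℝ) (j : ℕ) :
    Pm x m (j+1) (j+1) = Sp (x (j+1)) (m (j+1)) * Pm x m j j := by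
  have h2 : List.map ((fun i => Sp (x (j+1 - i)) (m (j+1 - i))) ∘ Nat.succ) (List.range j)
      = List.map (fun i => Sp (x (j - i)) (m (j - i))) (List.range j) := by
    apply List.map_congr_left
    intro a _
    have : j + 1 - Nat.succ a = j - a := by omega
    simp [Function.comp, this]
  rw [Pm, List.range_succ_eq_map, List.map_cons, List.prod_cons, List.map_map, h2]
  rw [Nat.sub_zero]
  rfl

lemma Pm_split (x m : ℕ → ℝ) (n k : ℕ) (hkn : k ≤ n) :
    Pm x m n n = Pm x m n k * Pm x m (n-k) (n-k) := by
  have h : n = k + (n - k) := by omega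
  have h2 : List.map ((fun i => Sp (x (n - i)) (m (n - i))) ∘ (k + ·)) (List.range (n-k))
      = List.map (fun i => Sp (x (n - k - i)) (m (n - k - i))) (List.range (n-k)) := by
    apply List.map_congr_left
    intro a _
    have : n - (k + a) = n - k - a := by omega
    simp [Function.comp, this]
  rw [Pm]
  rw [show List.range n = List.range (k + (n-k)) by rw [← h]]
  rw [List.range_add, List.map_append, List.prod_append, List.map_map, h2]
  rfl

lemma Pm_lead (x m : ℕ → ℝ) (n : ℕ) (hn : 1 ≤ n)
    (hm : ∀ i, 1 ≤ i → i ≤ n → 0 < m i)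
    (hx : ∀ i, 1 ≤ i → i < n → x i < x (i + 1)) :
    ∀ k, 1 ≤ k → k ≤ n → ∃ d : ℝ, d ≠ 0 ∧
      ∀ i j, (Pm x m n k i j).coeff k = d * vR (x n) i * wR (x (n - k + 1)) j := by
  intro k
  induction k with
  | zero => omega
  | succ k ih =>
    intro _ hk1n
    rcases Nat.eq_or_lt_of_le (Nat.one_le_iff_ne_zero.mpr (Nat.succ_ne_zero k)) with h1 | h1
    · -- k + 1 = 1, base case
      have hk0 : k = 0 := by omega
      subst hk0
      refine ⟨-(m n), by have := hm n hn le_rfl; linarith, ?_⟩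
      intro i j
      have hPm : Pm x m n 1 = Sp (x n) (m n) := by
        rw [Pm, show List.range 1 = [0] from rfl, List.map_singleton, List.prod_singleton, Nat.sub_zero]
      rw [hPm, Sp_coeff1]
      have : n - 1 + 1 = n := by omega
      rw [this]
      ring
    · -- inductive step: k ≥ 1
      have hk1 : 1 ≤ k := by omega
      have hkn : k ≤ n := by omega
      obtain ⟨d, hd0, hd⟩ := ih hk1 hkn
      -- positivity data
      have ha1 : 1 ≤ n - k := by omega
      have ha2 : n - k < n := by omega
      have hxlt : x (n - k) < x (n - k + 1) := hx (n - k) ha1 ha2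
      have hmpos : 0 < m (n - k) := hm (n - k) ha1 (by omega)
      have hg : 0 < ∑ l, wR (x (n - k + 1)) l * vR (x (n - k)) l :=
        wR_dot_vR_pos _ _ hxlt
      refine ⟨d * (-(m (n - k))) * (∑ l, wR (x (n - k + 1)) l * vR (x (n - k)) l),
        mul_ne_zero (mul_ne_zero hd0 (neg_ne_zero.mpr (ne_of_gt hmpos))) (ne_of_gt hg), ?_⟩
      intro i j
      rw [Pm_succ_right, Matrix.mul_apply]
      rw [finset_sum_coeff]
      have hterm : ∀ l : Fin 3,
          (Pm x m n k i l * Sp (x (n - k)) (m (n - k)) l j).coeff (k + 1)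
          = (d * (-(m (n - k))) * vR (x n) i * wR (x (n - k)) j)
              * (wR (x (n - k + 1)) l * vR (x (n - k)) l) := by
        intro l
        rw [coeff_mul_add_eq_of_natDegree_le (Pm_natDegree x m n k i l) (Sp_natDegree _ _ l j)]
        rw [hd i l, Sp_coeff1]
        ring
      rw [Finset.sum_congr rfl (fun l _ => hterm l), ← Finset.mul_sum]
      have hidx : n - (k + 1) + 1 = n - k := by omega
      rw [hidx]
      ring

lemma qv_lead (x m : ℕ → ℝ) (n : ℕ) (hn : 1 ≤ n)
    (hm : ∀ i, 1 ≤ i → i ≤ n → 0 < m i)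
    (hx : ∀ i, 1 ≤ i → i < n → x i < x (i + 1)) :
    ∀ j, 1 ≤ j → j ≤ n → ∃ c : ℝ, c ≠ 0 ∧
      ∀ i, (qv x m j i).coeff j = c * vR (x j) i := by
  intro j
  induction j with
  | zero => omega
  | succ j ih =>
    intro _ hj1n
    rcases Nat.lt_or_ge 1 (j+1) with h1 | h1
    case inr =>
      -- base case j + 1 = 1
      have hj0 : j = 0 := by omega
      subst hj0
      refine ⟨-(m 1) * Real.exp (x 1), ?_, ?_⟩
      · have := hm 1 le_rfl hj1n
        have := Real.exp_pos (x 1)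
        intro hc
        nlinarith
      · intro i
        have hPm : Pm x m 1 1 = Sp (x 1) (m 1) := by
          rw [Pm, show List.range 1 = [0] from rfl, List.map_singleton,
            List.prod_singleton, Nat.sub_zero]
        rw [qv_eq, hPm, Sp_coeff1]
        have : wR (x 1) 0 = Real.exp (x 1) := rfl
        rw [this]
        ring
    case inl =>
      have hj1 : 1 ≤ j := by omega
      have hjn : j ≤ n := by omega
      obtain ⟨c, hc0, hc⟩ := ih hj1 hjn
      have hxlt : x j < x (j + 1) := hx j hj1 (by omega)
      have hmpos : 0 < m (j+1) := hm (j+1) (by omega) hj1n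
      have hg : 0 < ∑ l, wR (x (j+1)) l * vR (x j) l := wR_dot_vR_pos _ _ hxlt
      refine ⟨(-(m (j+1))) * c * (∑ l, wR (x (j+1)) l * vR (x j) l),
        mul_ne_zero (mul_ne_zero (neg_ne_zero.mpr (ne_of_gt hmpos)) hc0) (ne_of_gt hg), ?_⟩
      intro i
      rw [qv_eq, Pm_self_succ, Matrix.mul_apply, finset_sum_coeff]
      have hterm : ∀ l : Fin 3,
          (Sp (x (j+1)) (m (j+1)) i l * Pm x m j j l 0).coeff (j + 1)
          = ((-(m (j+1))) * c * vR (x (j+1)) i) * (wR (x (j+1)) l * vR (x j) l) := by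
        intro l
        rw [show j + 1 = 1 + j by omega]
        rw [coeff_mul_add_eq_of_natDegree_le (Sp_natDegree _ _ i l) (Pm_natDegree x m j j l 0)]
        rw [Sp_coeff1, ← qv_eq, hc l]
        ring
      rw [Finset.sum_congr rfl (fun l _ => hterm l), ← Finset.mul_sum]
      ring

lemma adj_Pm_natDegree (x m : ℕ → ℝ) (n : ℕ) :
    ∀ k, ∀ i j, ((adjugate (Pm x m n k)) i j).natDegree ≤ k := by
  intro k
  induction k with
  | zero =>
    intro i j
    have : Pm x m n 0 = 1 := by rw [Pm]; simp
    rw [this, adjugate_one, Matrix.one_apply]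
    split <;> simp
  | succ k ih =>
    intro i j
    rw [Pm_succ_right, adjugate_mul_distrib, adjugate_Sp, Matrix.mul_apply]
    apply (natDegree_sum_le _ _).trans
    rw [Finset.fold_max_le]
    refine ⟨by simp, fun l _ => ?_⟩
    apply natDegree_mul_le.trans
    have h1 := Sp_natDegree (x (n-k)) (-(m (n-k))) i l
    have h2 := ih l j
    omega

noncomputable def Np (x m : ℕ → ℝ) (n k : ℕ) : ℝ[X] :=
  qv x m n 2 * Pm x m n k 0 0 - qv x m n 0 * Pm x m n k 2 0

lemma adj_entry_21 {R : Type*} [CommRing R] (A : Matrix (Fin 3) (Fin 3) R) :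
    adjugate A 2 1 = A 2 0 * A 0 1 - A 2 1 * A 0 0 := by
  rw [adjugate_fin_three]
  norm_num
  simp [Matrix.cons_val]
  ring

lemma adj_entry_11 {R : Type*} [CommRing R] (A : Matrix (Fin 3) (Fin 3) R) :
    adjugate A 1 1 = A 2 2 * A 0 0 - A 2 0 * A 0 2 := by
  rw [adjugate_fin_three]
  norm_num
  ring

lemma Np_eq (x m : ℕ → ℝ) (n k : ℕ) (hkn : k ≤ n) :
    Np x m n k = (-(adjugate (Pm x m n k) 2 1)) * qv x m (n-k) 1
      + (adjugate (Pm x m n k) 1 1) * qv x m (n-k) 2 := by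
  have hq : ∀ i, qv x m n i = ∑ l, Pm x m n k i l * qv x m (n-k) l := by
    intro i
    rw [qv_eq, Pm_split x m n k hkn, Matrix.mul_apply]
    simp [qv_eq]
  rw [Np, hq 0, hq 2, adj_entry_21, adj_entry_11]
  simp only [Fin.sum_univ_three]
  ring

lemma qv_natDegree (x m : ℕ → ℝ) (j : ℕ) (i : Fin 3) : (qv x m j i).natDegree ≤ j := by
  rw [qv_eq]; exact Pm_natDegree x m j j i 0

lemma Np_natDegree (x m : ℕ → ℝ) (n k : ℕ) (hkn : k ≤ n) :
    (Np x m n k).natDegree ≤ n := by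
  rw [Np_eq x m n k hkn]
  apply (natDegree_add_le _ _).trans
  have h1 : ((-(adjugate (Pm x m n k) 2 1)) * qv x m (n-k) 1).natDegree ≤ n := by
    apply natDegree_mul_le.trans
    have := adj_Pm_natDegree x m n k 2 1
    have := qv_natDegree x m (n-k) 1
    rw [natDegree_neg]
    omega
  have h2 : ((adjugate (Pm x m n k) 1 1) * qv x m (n-k) 2).natDegree ≤ n := by
    apply natDegree_mul_le.trans
    have := adj_Pm_natDegree x m n k 1 1
    have := qv_natDegree x m (n-k) 2
    omega
  omega

lemma Sblock_eval (x m : ℕ → ℝ) (n k : ℕ) (z : ℝ) (i j : Fin 3) :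
    Sblock x m n k z i j = eval z (Pm x m n k i j) := by
  rw [← Pm_eval x m n k z]; rfl

theorem weyl_approx_C (n : ℕ) (hn : 1 ≤ n) (x m : ℕ → ℝ)
    (hm : ∀ i, 1 ≤ i → i ≤ n → 0 < m i)
    (hx : ∀ i, 1 ≤ i → i < n → x i < x (i + 1))
    (k : ℕ) (hk1 : 1 ≤ k) (hkn : k ≤ n) :
    (fun z : ℝ => ABCvec x m n z 2 / ABCvec x m n z 0
        - Sblock x m n k z 2 0 / Sblock x m n k z 0 0)
      =O[Filter.atTop] (fun z : ℝ => 1 / z ^ k) := by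
  set Ap := qv x m n 0 with hAp
  set s11 := Pm x m n k 0 0 with hs11
  -- exact degrees and nonvanishing of leading coefficients
  obtain ⟨c, hc0, hc⟩ := qv_lead x m n hn hm hx n hn le_rfl
  obtain ⟨d, hd0, hd⟩ := Pm_lead x m n hn hm hx k hk1 hkn
  have hA_coeff : Ap.coeff n ≠ 0 := by
    rw [hAp, hc 0]
    have : vR (x n) 0 = Real.exp (-(x n)) := rfl
    rw [this]
    exact mul_ne_zero hc0 (Real.exp_ne_zero _)
  have hA_deg : Ap.natDegree = n :=
    le_antisymm (qv_natDegree x m n 0) (le_natDegree_of_ne_zero hA_coeff)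
  have hA_ne : Ap ≠ 0 := fun h => hA_coeff (by simp [h])
  have hs_coeff : s11.coeff k ≠ 0 := by
    rw [hs11, hd 0 0]
    have h1 : vR (x n) 0 = Real.exp (-(x n)) := rfl
    have h2 : wR (x (n - k + 1)) 0 = Real.exp (x (n - k + 1)) := rfl
    rw [h1, h2]
    exact mul_ne_zero (mul_ne_zero hd0 (Real.exp_ne_zero _)) (Real.exp_ne_zero _)
  have hs_deg : s11.natDegree = k :=
    le_antisymm (Pm_natDegree x m n k 0 0) (le_natDegree_of_ne_zero hs_coeff)
  have hs_ne : s11 ≠ 0 := fun h => hs_coeff (by simp [h])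
  set D := Ap * s11 with hD
  have hD_ne : D ≠ 0 := mul_ne_zero hA_ne hs_ne
  have hD_deg : D.natDegree = n + k := by
    rw [hD, natDegree_mul hA_ne hs_ne, hA_deg, hs_deg]
  -- eventual nonvanishing
  have hA_pos_deg : 0 < Ap.degree := by
    rw [degree_eq_natDegree hA_ne, hA_deg]
    exact_mod_cast hn
  have hs_pos_deg : 0 < s11.degree := by
    rw [degree_eq_natDegree hs_ne, hs_deg]
    exact_mod_cast hk1
  have hA_ev : ∀ᶠ z in Filter.atTop, eval z Ap ≠ 0 := by
    filter_upwards [(Polynomial.abs_tendsto_atTop Ap hA_pos_deg).eventually_gt_atTop 0] with z hz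
    intro h
    rw [h] at hz
    simp at hz
  have hs_ev : ∀ᶠ z in Filter.atTop, eval z s11 ≠ 0 := by
    filter_upwards [(Polynomial.abs_tendsto_atTop s11 hs_pos_deg).eventually_gt_atTop 0] with z hz
    intro h
    rw [h] at hz
    simp at hz
  -- big-O pieces
  have hN : (fun z : ℝ => eval z (Np x m n k)) =O[Filter.atTop] fun z : ℝ => z ^ n := by
    have h := Polynomial.isBigO_of_degree_le (P := Np x m n k) (Q := (X : ℝ[X]) ^ n)
      (by
        rw [degree_X_pow]
        exact (degree_le_natDegree).trans (by exact_mod_cast Np_natDegree x m n k hkn))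
    simpa using h
  have hDO : (fun z : ℝ => (eval z D)⁻¹) =O[Filter.atTop] fun z : ℝ => (z ^ (n + k))⁻¹ := by
    have hequiv := Polynomial.isEquivalent_atTop_lead D
    rw [hD_deg] at hequiv
    have hinv := hequiv.inv
    apply hinv.isBigO.trans
    have : (fun z : ℝ => (D.leadingCoeff * z ^ (n + k))⁻¹)
        = fun z : ℝ => D.leadingCoeff⁻¹ * (z ^ (n + k))⁻¹ := by
      funext z; rw [mul_inv]
    rw [show (fun x => D.leadingCoeff * x ^ (n + k))⁻¹ = fun z : ℝ => (D.leadingCoeff * z ^ (n + k))⁻¹ from rfl, this]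
    exact (Asymptotics.isBigO_refl _ _).const_mul_left _
  have hmul := hN.mul hDO
  -- transfer via eventual equality
  have hf_eq : (fun z : ℝ => eval z (Np x m n k) * (eval z D)⁻¹)
      =ᶠ[Filter.atTop] (fun z : ℝ => ABCvec x m n z 2 / ABCvec x m n z 0
        - Sblock x m n k z 2 0 / Sblock x m n k z 0 0) := by
    filter_upwards [hA_ev, hs_ev] with z hA hs
    rw [← qv_eval x m n z 2, ← qv_eval x m n z 0, Sblock_eval, Sblock_eval]
    rw [div_sub_div _ _ hA hs]
    rw [Np, hD]
    rw [eval_sub, eval_mul, eval_mul, eval_mul]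
    rw [div_eq_mul_inv]
  have hg_eq : (fun z : ℝ => z ^ n * (z ^ (n + k))⁻¹)
      =ᶠ[Filter.atTop] (fun z : ℝ => 1 / z ^ k) := by
    filter_upwards [Filter.eventually_ne_atTop 0] with z hz
    rw [pow_add, mul_inv, ← mul_assoc, mul_inv_cancel₀ (pow_ne_zero _ hz), one_mul, one_div]
  exact hmul.congr' hf_eq hg_eq
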